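/- Zagier's polynomial S_r(x,y,z) = ((xy)^r(x+y)^{r+1} + (yz)^r(y+z)^{r+1} + (zx)^r(z+x)^{r+1})/(x+y+z) has integer coefficients, i.e., x+y+z divides (xy)^r(x+y)^{r+1} + (yz)^r(y+z)^{r+1} + (zx)^r(z+x)^{r+1} in ℤ[x,y,z] for every r ≥ 0. -/
import Mathlib


open MvPolynomial

lemma zagier_aux {R : Type*} [CommRing R] (a b : R) (r : ℕ) :
    (a * b) ^ r * (a + b) ^ (r + 1) + (b * -(a + b)) ^ r * (b + -(a + b)) ^ (r + 1) +
      (-(a + b) * a) ^ r * (-(a + b) + a) ^ (r + 1) = 0 := by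
  have h : ∀ x y : R, (-x) ^ r * (-y) ^ (r + 1) = -((x * y) ^ r * y) := by
    intro x y
    rw [pow_succ, ← mul_assoc, ← mul_pow, neg_mul_neg, mul_neg]
  rw [show b + -(a + b) = -a by ring, show -(a + b) + a = -b by ring,
      show b * -(a + b) = -(b * (a + b)) by ring,
      show -(a + b) * a = -((a + b) * a) by ring, h, h,
      show b * (a + b) * a = a * b * (a + b) by ring,
      show (a + b) * a * b = a * b * (a + b) by ring,
      pow_succ (a + b), ← mul_assoc, ← mul_pow]
  ring
/-- Zagier's polynomial `S_r(x,y,z)` has integer coefficients: `x+y+z` divides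
`(xy)^r (x+y)^{r+1} + (yz)^r (y+z)^{r+1} + (zx)^r (z+x)^{r+1}` in `ℤ[x,y,z]`
for every `r ≥ 0`. -/
theorem zagier_Sr_integral (r : ℕ) :
    ∃ S : MvPolynomial (Fin 3) ℤ,
      (X 0 * X 1) ^ r * (X 0 + X 1) ^ (r + 1) +
        (X 1 * X 2) ^ r * (X 1 + X 2) ^ (r + 1) +
        (X 2 * X 0) ^ r * (X 2 + X 0) ^ (r + 1) =
      (X 0 + X 1 + X 2) * S := by
  show (X 0 + X 1 + X 2 : MvPolynomial (Fin 3) ℤ) ∣ _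
  rw [← Ideal.mem_span_singleton, ← Ideal.Quotient.eq_zero_iff_mem]
  set I := Ideal.span {(X 0 + X 1 + X 2 : MvPolynomial (Fin 3) ℤ)}
  set q := Ideal.Quotient.mk I
  have hs : q (X 0 + X 1 + X 2) = 0 :=
    Ideal.Quotient.eq_zero_iff_mem.mpr (Ideal.mem_span_singleton_self _)
  have hc : q (X 2) = -(q (X 0) + q (X 1)) := by
    rw [map_add, map_add] at hs
    linear_combination hs
  simp only [map_add, map_mul, map_pow]
  rw [hc]
  exact zagier_aux (q (X 0)) (q (X 1)) r
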